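/- arXiv:2103.00174 — 7 statements merged into one kernel-verified Lean document; each statement's English description precedes it below -/
import Mathlib

section
/- Let X be a set, σ : X → X a bijection, n ≥ 0, and f₀, …, f_n : X → ℝ pairwise distinct functions such that for every index k ∈ {0,…,n} there exists an index l ∈ {0,…,n} with f_k ∘ σ = f_l. Then there exists an n × n integer matrix A that is invertible over ℤ (i.e. a unit in the ring of n × n matrices over ℤ) such that for every x ∈ X and every k ∈ {0,…,n−1}: f_k(σ(x)) − f_n(σ(x)) = Σ_{l=0}^{n−1} A(k,l) · (f_l(x) − f_n(x)). -/
private lemma sum_ind {R : Type*} [CommRing R] {n : ℕ} (G : Fin (n+1) → R)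
    (hG : G (Fin.last n) = 0) (j : Fin (n+1)) :
    ∑ m : Fin n, (if j = Fin.castSucc m then (1:R) else 0) * G (Fin.castSucc m) = G j := by
  induction j using Fin.lastCases with
  | last =>
    rw [hG]
    refine Finset.sum_eq_zero fun m _ => ?_
    simp [(Fin.castSucc_lt_last m).ne']
  | cast m0 =>
    rw [Finset.sum_eq_single m0]
    · simp
    · intro b _ hb
      simp [Fin.castSucc_inj, (Ne.symm hb)]
    · simp

private def Mmat {n : ℕ} (π : Equiv.Perm (Fin (n+1))) : Matrix (Fin n) (Fin n) ℤ :=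
  fun k l => (if π (Fin.castSucc k) = Fin.castSucc l then 1 else 0)
    - (if π (Fin.last n) = Fin.castSucc l then 1 else 0)

private lemma Mmat_mul {n : ℕ} (π ρ : Equiv.Perm (Fin (n+1))) :
    Mmat π * Mmat ρ = Mmat (ρ * π) := by
  ext k l
  simp only [Matrix.mul_apply, Mmat]
  set G : Fin (n+1) → ℤ := fun j => (if ρ j = Fin.castSucc l then 1 else 0)
    - (if ρ (Fin.last n) = Fin.castSucc l then 1 else 0) with hGdef
  have hG : G (Fin.last n) = 0 := by simp [hGdef]
  calc ∑ m : Fin n,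
      ((if π (Fin.castSucc k) = Fin.castSucc m then (1:ℤ) else 0)
        - (if π (Fin.last n) = Fin.castSucc m then 1 else 0)) * G (Fin.castSucc m)
      = G (π (Fin.castSucc k)) - G (π (Fin.last n)) := by
        simp only [sub_mul, Finset.sum_sub_distrib, sum_ind G hG]
    _ = _ := by simp [hGdef]; rfl

private lemma Mmat_one {n : ℕ} : Mmat (n := n) 1 = 1 := by
  ext k l
  simp only [Mmat, Equiv.Perm.one_apply, Matrix.one_apply]
  have : ¬ (Fin.last n = Fin.castSucc l) := (Fin.castSucc_lt_last l).ne'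
  simp [this, Fin.castSucc_inj, eq_comm]

/-- Proposition 1 of the paper: σ extends through the induced map
`x ↦ (f_k(x) − f_n(x))_{k<n}` to a ℤ-linear transformation of ℝⁿ given by a matrix
invertible over ℤ. -/
theorem stmt_1 {X : Type*} (σ : X → X) (hσ : Function.Bijective σ)
    (n : ℕ) (f : Fin (n + 1) → X → ℝ) (hf : Function.Injective f)
    (hinv : ∀ k : Fin (n + 1), ∃ l : Fin (n + 1), f k ∘ σ = f l) :
    ∃ A : Matrix (Fin n) (Fin n) ℤ, IsUnit A ∧
      ∀ (x : X) (k : Fin n),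
        f (Fin.castSucc k) (σ x) - f (Fin.last n) (σ x) =
          ∑ l : Fin n, (A k l : ℝ) * (f (Fin.castSucc l) x - f (Fin.last n) x) := by
  choose τ0 hτ0 using hinv
  have hτ0inj : Function.Injective τ0 := by
    intro a b hab
    apply hf
    have : f a ∘ σ = f b ∘ σ := by rw [hτ0 a, hτ0 b, hab]
    funext x
    obtain ⟨y, rfl⟩ := hσ.2 x
    exact congrFun this y
  let τ : Equiv.Perm (Fin (n+1)) := Equiv.ofBijective τ0 (Finite.injective_iff_bijective.1 hτ0inj)
  have hτ : ∀ j x, f j (σ x) = f (τ j) x := fun j x => congrFun (hτ0 j) x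
  refine ⟨Mmat τ, ?_, ?_⟩
  · exact ⟨⟨Mmat τ, Mmat τ⁻¹,
      by rw [Mmat_mul, inv_mul_cancel, Mmat_one],
      by rw [Mmat_mul, mul_inv_cancel, Mmat_one]⟩, rfl⟩
  · intro x k
    have key : ∀ j : Fin (n+1),
        ∑ l : Fin n, (if j = Fin.castSucc l then (1:ℝ) else 0)
            * (f (Fin.castSucc l) x - f (Fin.last n) x)
          = f j x - f (Fin.last n) x :=
      sum_ind (fun j => f j x - f (Fin.last n) x) (by simp)
    have : ∑ l : Fin n, ((Mmat τ) k l : ℝ) * (f (Fin.castSucc l) x - f (Fin.last n) x)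
        = (f (τ (Fin.castSucc k)) x - f (Fin.last n) x)
          - (f (τ (Fin.last n)) x - f (Fin.last n) x) := by
      simp only [Mmat, Int.cast_sub, Int.cast_ite, Int.cast_one, Int.cast_zero, sub_mul,
        Finset.sum_sub_distrib, key]
    rw [this, hτ, hτ]
    ring
end

section
/- Let X be a set, σ : X → X a bijection, n ≥ 0, and f₀, …, f_n : X → ℝ pairwise distinct functions such that for every index k ∈ {0,…,n} there exists an index l ∈ {0,…,n} with f_k ∘ σ = f_l. Then there exists a permutation τ of {0,…,n} such that for every x ∈ X there exists c ∈ ℝ with, for all k, the k-th entry of the tropical matrix–vector product P_τ ⊙ (trop(f₀(x)),…,trop(f_n(x))) equal to trop(c) ⊙ trop(f_k(σ(x))), where P_τ is the permutation matrix of τ over T (tropical one 0 at positions (k, τ(k)) and tropical zero −∞ elsewhere). -/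
/-- Max-plus tropical matrix–vector product over `T = WithBot ℝ = ℝ ∪ {−∞}`:
tropical addition is `max` (`⊔`, with `⊥ = −∞` the tropical zero) and tropical
multiplication is ordinary addition (with `⊥` absorbing). -/
def tropMulVec {n : ℕ} (M : Fin n → Fin n → WithBot ℝ) (v : Fin n → WithBot ℝ) :
    Fin n → WithBot ℝ :=
  fun k => Finset.univ.sup fun l => M k l + v l

/-- The tropical permutation matrix of `τ`: tropical one `0` at positions `(k, τ k)`
and tropical zero `−∞ = ⊥` elsewhere. -/
def tropPermMat {n : ℕ} (τ : Equiv.Perm (Fin n)) : Fin n → Fin n → WithBot ℝ :=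
  fun k l => if l = τ k then (0 : WithBot ℝ) else ⊥

lemma tropMulVec_perm {n : ℕ} (τ : Equiv.Perm (Fin n)) (v : Fin n → WithBot ℝ)
    (k : Fin n) : tropMulVec (tropPermMat τ) v k = v (τ k) := by
  unfold tropMulVec tropPermMat
  apply le_antisymm
  · apply Finset.sup_le
    intro l _
    by_cases h : l = τ k
    · subst h; simp
    · simp [h]
  · have := Finset.le_sup (f := fun l => (if l = τ k then (0 : WithBot ℝ) else ⊥) + v l)
      (Finset.mem_univ (τ k))
    simpa using this

/-- Proposition 2 of the paper: σ extends to a permutation matrix in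
`PGL_trop(n+1, T)`, i.e. the permutation matrix maps the tropical coordinate vector of
`x` to that of `σ x` up to a tropical scalar. -/
theorem stmt_2 {X : Type*} (σ : X → X) (hσ : Function.Bijective σ)
    (n : ℕ) (f : Fin (n + 1) → X → ℝ) (hf : Function.Injective f)
    (hinv : ∀ k : Fin (n + 1), ∃ l : Fin (n + 1), f k ∘ σ = f l) :
    ∃ τ : Equiv.Perm (Fin (n + 1)), ∀ x : X, ∃ c : ℝ, ∀ k : Fin (n + 1),
      tropMulVec (tropPermMat τ) (fun l => ((f l x : ℝ) : WithBot ℝ)) k =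
        (c : WithBot ℝ) + ((f k (σ x) : ℝ) : WithBot ℝ) := by
  choose g hg using hinv
  have hginj : Function.Injective g := by
    intro k k' h
    apply hf
    have : f k ∘ σ = f k' ∘ σ := by rw [hg, hg, h]
    funext x
    obtain ⟨y, rfl⟩ := hσ.2 x
    exact congrFun this y
  refine ⟨Equiv.ofBijective g (Finite.injective_iff_bijective.mp hginj), fun x => ⟨0, fun k => ?_⟩⟩
  rw [tropMulVec_perm]
  have : f (g k) x = f k (σ x) := (congrFun (hg k) x).symm
  simp [Equiv.ofBijective, this]
end

section
/- For every n ≥ 0 and all permutations τ, τ′ of {0,…,n}: A_{τ ∘ τ′} = A_{τ′} · A_τ (product of integer matrices). In particular A_{id} = I, so τ ↦ A_τ is a group antihomomorphism from the symmetric group on {0,…,n} to the group of invertible n × n integer matrices. -/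
/-- The integer matrix `A_τ` from the proof of Proposition 1 of the paper:
`A_τ(k,l) = [τ(k) = l] − [τ(n) = l]` for `k, l ∈ {0,…,n−1}` regarded inside `{0,…,n}`. -/
def Amat {n : ℕ} (τ : Equiv.Perm (Fin (n + 1))) : Matrix (Fin n) (Fin n) ℤ :=
  Matrix.of fun k l =>
    (if τ (Fin.castSucc k) = Fin.castSucc l then (1 : ℤ) else 0) -
      (if τ (Fin.last n) = Fin.castSucc l then (1 : ℤ) else 0)

/-- `τ ↦ A_τ` is a group antihomomorphism: `A_{τ ∘ τ′} = A_{τ′} · A_τ`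
(note that `(τ * τ') k = τ (τ' k)`, i.e. `τ * τ' = τ ∘ τ'`), and `A_id = I`. -/
theorem stmt_6 (n : ℕ) (τ τ' : Equiv.Perm (Fin (n + 1))) :
    Amat (τ * τ') = Amat τ' * Amat τ ∧ Amat (1 : Equiv.Perm (Fin (n + 1))) = 1 := by
  constructor
  · ext k l
    simp only [Amat, Matrix.mul_apply, Matrix.of_apply, Equiv.Perm.mul_apply]
    set F : Fin (n + 1) → ℤ := fun x =>
      ((if τ' (Fin.castSucc k) = x then (1 : ℤ) else 0) -
          (if τ' (Fin.last n) = x then (1 : ℤ) else 0)) *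
        ((if τ x = Fin.castSucc l then (1 : ℤ) else 0) -
          (if τ (Fin.last n) = Fin.castSucc l then (1 : ℤ) else 0)) with hF
    have hsum : ∑ m : Fin n, F (Fin.castSucc m) = ∑ x : Fin (n + 1), F x := by
      rw [Fin.sum_univ_castSucc]
      simp [hF]
    have key : ∑ x : Fin (n + 1), F x =
        (if τ (τ' (Fin.castSucc k)) = Fin.castSucc l then (1 : ℤ) else 0) -
          (if τ (τ' (Fin.last n)) = Fin.castSucc l then (1 : ℤ) else 0) := by
      simp only [hF, sub_mul, Finset.sum_sub_distrib, ite_mul, one_mul, zero_mul,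
        Finset.sum_ite_eq, Finset.mem_univ, if_true]
      ring
    exact (hsum.trans key).symm
  · ext k l
    simp only [Amat, Matrix.of_apply, Equiv.Perm.one_apply, Matrix.one_apply]
    have h1 : ¬ (Fin.last n = Fin.castSucc l) := by
      simp [Fin.ext_iff, (Fin.castSucc_lt_last l).ne']
    have h2 : (Fin.castSucc k = Fin.castSucc l) ↔ k = l := Fin.castSucc_inj
    by_cases h : k = l <;> simp [h, h1, h2]
end

section
/- For every n ≥ 0 and every permutation τ of {0,…,n}: if A_τ is the n × n identity matrix, then τ is the identity permutation. Hence the assignment τ ↦ A_τ is injective on the symmetric group of {0,…,n}. -/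
/-- Auxiliary: if `Amat τ = Amat σ` and `σ (last) = castSucc j` but `τ (last) ≠ castSucc j`,
we get a contradiction. -/
lemma amat_aux {n : ℕ} {τ σ : Equiv.Perm (Fin (n + 1))} (h : Amat τ = Amat σ)
    {j : Fin n} (hσ : σ (Fin.last n) = Fin.castSucc j)
    (hτ : τ (Fin.last n) ≠ Fin.castSucc j) : False := by
  have hpre : τ.symm (Fin.castSucc j) ≠ Fin.last n := by
    intro hc
    apply hτ
    rw [← τ.apply_symm_apply (Fin.castSucc j), hc]
  obtain ⟨k, hk⟩ := Fin.exists_castSucc_eq.mpr hpre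
  have hτk : τ (Fin.castSucc k) = Fin.castSucc j := by
    rw [hk, τ.apply_symm_apply]
  have hσk : σ (Fin.castSucc k) ≠ Fin.castSucc j := by
    intro hc
    have : (Fin.castSucc k : Fin (n + 1)) = Fin.last n := by
      have := hc.trans hσ.symm
      exact σ.injective this
    exact (Fin.castSucc_lt_last k).ne this
  have hE : Amat τ k j = Amat σ k j := by rw [h]
  simp only [Amat, Matrix.of_apply] at hE
  rw [if_pos hτk, if_neg hτ, if_neg hσk, if_pos hσ] at hE
  omega

/-- If `Amat τ = Amat σ` then `τ = σ`. -/
lemma amat_inj {n : ℕ} {τ σ : Equiv.Perm (Fin (n + 1))} (h : Amat τ = Amat σ) : τ = σ := by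
  have hlast : τ (Fin.last n) = σ (Fin.last n) := by
    by_contra hne
    rcases eq_or_ne (σ (Fin.last n)) (Fin.last n) with hσ | hσ
    · have hτ : τ (Fin.last n) ≠ Fin.last n := fun hc => hne (hc.trans hσ.symm)
      obtain ⟨j, hj⟩ := Fin.exists_castSucc_eq.mpr hτ
      exact amat_aux h.symm hj.symm (by rw [hσ]; exact (Fin.castSucc_lt_last j).ne')
    · obtain ⟨j, hj⟩ := Fin.exists_castSucc_eq.mpr hσ
      exact amat_aux h hj.symm (fun hc => hne (hc.trans hj))
  have hcast : ∀ k : Fin n, τ (Fin.castSucc k) = σ (Fin.castSucc k) := by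
    intro k
    have hE : ∀ l : Fin n, Amat τ k l = Amat σ k l := fun l => by rw [h]
    simp only [Amat, Matrix.of_apply, hlast] at hE
    have hInd : ∀ l : Fin n,
        (if τ (Fin.castSucc k) = Fin.castSucc l then (1 : ℤ) else 0) =
        (if σ (Fin.castSucc k) = Fin.castSucc l then (1 : ℤ) else 0) := by
      intro l
      have := hE l
      omega
    rcases eq_or_ne (τ (Fin.castSucc k)) (Fin.last n) with hτk | hτk
    · rcases eq_or_ne (σ (Fin.castSucc k)) (Fin.last n) with hσk | hσk
      · rw [hτk, hσk]
      · obtain ⟨l, hl⟩ := Fin.exists_castSucc_eq.mpr hσk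
        have := hInd l
        rw [if_pos hl.symm, if_neg (by rw [hτk]; exact (Fin.castSucc_lt_last l).ne')] at this
        omega
    · obtain ⟨l, hl⟩ := Fin.exists_castSucc_eq.mpr hτk
      have := hInd l
      rw [if_pos hl.symm] at this
      rw [hl.symm] at hτk ⊢
      by_cases hσk : σ (Fin.castSucc k) = Fin.castSucc l
      · exact hσk.symm
      · rw [if_neg hσk] at this; omega
  ext x
  rcases eq_or_ne x (Fin.last n) with rfl | hx
  · exact Fin.val_eq_of_eq hlast
  · obtain ⟨k, rfl⟩ := Fin.exists_castSucc_eq.mpr hx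
    exact Fin.val_eq_of_eq (hcast k)

/-- if `A_τ` is the identity matrix then `τ` is the identity permutation;
hence `τ ↦ A_τ` is injective. -/
theorem stmt_7 (n : ℕ) :
    (∀ τ : Equiv.Perm (Fin (n + 1)), Amat τ = 1 → τ = 1) ∧
      Function.Injective (fun τ : Equiv.Perm (Fin (n + 1)) => Amat τ) := by
  have hone : Amat (1 : Equiv.Perm (Fin (n + 1))) = 1 := by
    ext k l
    simp only [Amat, Matrix.of_apply, Matrix.one_apply]
    rw [Equiv.Perm.one_apply, Equiv.Perm.one_apply]
    rw [if_neg (Fin.castSucc_lt_last l).ne']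
    by_cases hkl : k = l
    · subst hkl; simp
    · rw [if_neg (fun hc => hkl (Fin.castSucc_injective n hc)), if_neg hkl]; ring
  refine ⟨fun τ hτ => amat_inj (hτ.trans hone.symm), fun τ σ h => amat_inj h⟩
end

section
/- Let G be a group acting faithfully on a set X, n ≥ 0, and f₀,…,f_n : X → ℝ pairwise distinct functions forming a G-invariant family. Assume the map φ : X → ℝⁿ defined by φ(x) = (f_k(x) − f_n(x))_{k=0,…,n−1} is injective. Then there exists an injective group homomorphism Ψ from G to the group GL(n, ℤ) of invertible n × n integer matrices such that for every σ ∈ G, every x ∈ X, and every k ∈ {0,…,n−1}: f_k(σ·x) − f_n(σ·x) = Σ_{l=0}^{n−1} Ψ(σ)(k,l) · (f_l(x) − f_n(x)). -/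
lemma stmt8_aux_sum {R : Type*} [Ring R] {n : ℕ} (h : Fin (n + 1) → R)
    (h0 : h (Fin.last n) = 0) (j : Fin (n + 1)) :
    ∑ m : Fin n, (if j = Fin.castSucc m then (1 : R) else 0) * h (Fin.castSucc m) = h j := by
  induction j using Fin.lastCases with
  | last =>
    rw [Finset.sum_eq_zero, h0]
    intro m _
    rw [if_neg (Fin.castSucc_lt_last m).ne', zero_mul]
  | cast k =>
    simp [Fin.castSucc_inj, ite_mul]

def stmt8_bigM (n : ℕ) (π : Equiv.Perm (Fin (n + 1))) : Matrix (Fin n) (Fin n) ℤ :=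
  fun k l => (if π (Fin.castSucc k) = Fin.castSucc l then 1 else 0) -
    (if π (Fin.last n) = Fin.castSucc l then 1 else 0)

lemma stmt8_bigM_one (n : ℕ) : stmt8_bigM n 1 = 1 := by
  ext k l
  simp [stmt8_bigM, Matrix.one_apply, Fin.castSucc_inj, (Fin.castSucc_lt_last l).ne']

lemma stmt8_bigM_mul (n : ℕ) (a b : Equiv.Perm (Fin (n + 1))) :
    stmt8_bigM n (a * b) = stmt8_bigM n b * stmt8_bigM n a := by
  ext k l
  set h : Fin (n + 1) → ℤ := fun j =>
    (if a j = Fin.castSucc l then 1 else 0) - (if a (Fin.last n) = Fin.castSucc l then 1 else 0)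
    with hh
  have h0 : h (Fin.last n) = 0 := sub_self _
  have key : ∀ j, ∑ m : Fin n, (if j = Fin.castSucc m then (1 : ℤ) else 0) * h (Fin.castSucc m)
      = h j := stmt8_aux_sum h h0
  calc stmt8_bigM n (a * b) k l = h (b (Fin.castSucc k)) - h (b (Fin.last n)) := by
        simp only [stmt8_bigM, hh, Equiv.Perm.mul_apply]; ring_nf; rfl
    _ = ∑ m : Fin n, (if b (Fin.castSucc k) = Fin.castSucc m then (1 : ℤ) else 0) * h (Fin.castSucc m)
        - ∑ m : Fin n, (if b (Fin.last n) = Fin.castSucc m then (1 : ℤ) else 0) * h (Fin.castSucc m) := by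
        rw [key, key]
    _ = (stmt8_bigM n b * stmt8_bigM n a) k l := by
        rw [← Finset.sum_sub_distrib]
        simp only [Matrix.mul_apply, stmt8_bigM, hh]
        congr 1; funext m; ring

/-- Theorem 7 of the paper: a group acting faithfully with a G-invariant
family of pairwise distinct functions inducing an injective map `φ : X → ℝⁿ` embeds into
`GL(n, ℤ)` compatibly with `φ`. -/
theorem stmt_8 {G X : Type*} [Group G] [MulAction G X] [FaithfulSMul G X]
    (n : ℕ) (f : Fin (n + 1) → X → ℝ) (hf : Function.Injective f)
    (hinv : ∀ σ : G, ∃ τ : Equiv.Perm (Fin (n + 1)),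
      ∀ (k : Fin (n + 1)) (x : X), f k (σ • x) = f (τ k) x)
    (hφ : Function.Injective fun x : X =>
      fun k : Fin n => f (Fin.castSucc k) x - f (Fin.last n) x) :
    ∃ Ψ : G →* (Matrix (Fin n) (Fin n) ℤ)ˣ, Function.Injective Ψ ∧
      ∀ (σ : G) (x : X) (k : Fin n),
        f (Fin.castSucc k) (σ • x) - f (Fin.last n) (σ • x) =
          ∑ l : Fin n, (((Ψ σ : Matrix (Fin n) (Fin n) ℤ)) k l : ℝ) *
            (f (Fin.castSucc l) x - f (Fin.last n) x) := by
  classical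
  choose τ hτ using hinv
  have τuniq : ∀ (σ : G) (e : Equiv.Perm (Fin (n + 1))),
      (∀ (k : Fin (n + 1)) (x : X), f k (σ • x) = f (e k) x) → e = τ σ := by
    intro σ e he
    ext k
    have : f (e k) = f (τ σ k) := by
      funext x
      rw [← he k x, hτ σ k x]
    exact Fin.val_eq_of_eq (hf this)
  have τ_one : τ (1 : G) = 1 :=
    (τuniq 1 1 (by intro k x; simp)).symm
  have τ_mul : ∀ σ₁ σ₂ : G, τ (σ₁ * σ₂) = τ σ₂ * τ σ₁ := by
    intro σ₁ σ₂
    refine (τuniq _ _ ?_).symm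
    intro k x
    rw [mul_smul, hτ, hτ]
    rfl
  let ψ0 : G →* Matrix (Fin n) (Fin n) ℤ :=
    { toFun := fun σ => stmt8_bigM n (τ σ)
      map_one' := by show stmt8_bigM n (τ 1) = 1; rw [τ_one, stmt8_bigM_one]
      map_mul' := fun a b => by
        show stmt8_bigM n (τ (a * b)) = stmt8_bigM n (τ a) * stmt8_bigM n (τ b)
        rw [τ_mul, stmt8_bigM_mul] }
  have compat : ∀ (σ : G) (x : X) (k : Fin n),
      f (Fin.castSucc k) (σ • x) - f (Fin.last n) (σ • x) =
        ∑ l : Fin n, ((stmt8_bigM n (τ σ) k l : ℤ) : ℝ) *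
          (f (Fin.castSucc l) x - f (Fin.last n) x) := by
    intro σ x k
    set h : Fin (n + 1) → ℝ := fun j => f j x - f (Fin.last n) x with hh
    have h0 : h (Fin.last n) = 0 := sub_self _
    have key : ∀ j, ∑ m : Fin n, (if j = Fin.castSucc m then (1 : ℝ) else 0) * h (Fin.castSucc m)
        = h j := stmt8_aux_sum h h0
    have : (∑ l : Fin n, ((stmt8_bigM n (τ σ) k l : ℤ) : ℝ) * (f (Fin.castSucc l) x - f (Fin.last n) x))
        = ∑ l : Fin n, (if τ σ (Fin.castSucc k) = Fin.castSucc l then (1:ℝ) else 0) * h (Fin.castSucc l)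
          - ∑ l : Fin n, (if τ σ (Fin.last n) = Fin.castSucc l then (1:ℝ) else 0) * h (Fin.castSucc l) := by
      rw [← Finset.sum_sub_distrib]
      congr 1; funext l
      simp only [stmt8_bigM, hh]
      push_cast [apply_ite (Int.cast : ℤ → ℝ)]
      ring
    rw [this, key, key, hτ, hτ]
    simp only [hh]
    ring
  refine ⟨ψ0.toHomUnits, ?_, ?_⟩
  · rw [injective_iff_map_eq_one]
    intro σ hσ
    have hM : stmt8_bigM n (τ σ) = 1 := by
      have := congrArg (Units.val) hσ
      simpa [ψ0] using this
    have hfix : ∀ x : X, σ • x = x := by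
      intro x
      apply hφ
      funext k
      show f (Fin.castSucc k) (σ • x) - f (Fin.last n) (σ • x)
        = f (Fin.castSucc k) x - f (Fin.last n) x
      rw [compat σ x k, hM]
      simp [Matrix.one_apply, apply_ite (Int.cast : ℤ → ℝ), ite_mul]
    exact eq_of_smul_eq_smul (fun x : X => by rw [hfix x, one_smul])
  · intro σ x k
    have : ((ψ0.toHomUnits σ : Matrix (Fin n) (Fin n) ℤ)) = stmt8_bigM n (τ σ) := rfl
    rw [this]
    exact compat σ x k
end

section
/- Let G be a group acting faithfully on a set X, n ≥ 0, and f₀,…,f_n : X → ℝ pairwise distinct functions forming a G-invariant family. Assume the map φ : X → ℝⁿ defined by φ(x) = (f_k(x) − f_n(x))_{k=0,…,n−1} is injective. Then there exists an injective group homomorphism Ψ from G to the symmetric group on {0,…,n} such that for every σ ∈ G and every x ∈ X there exists c ∈ ℝ with f_{Ψ(σ)(k)}(σ·x) = c + f_k(x) for all k ∈ {0,…,n}; equivalently, the permutation matrix of Ψ(σ) over the max-plus tropical semiring T maps the tropical coordinate vector (trop(f₀(σ·x)),…,trop(f_n(σ·x))) to (trop(f₀(x)),…,trop(f_n(x)))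 up to a tropical scalar. -/
/-- Theorem 8 of the paper: a group acting faithfully with a G-invariant
family of pairwise distinct functions inducing an injective map `φ : X → ℝⁿ` embeds into
the symmetric group on `{0,…,n}` (i.e. into `PGL_trop(n+1, T)` by permutation matrices),
compatibly with the induced rational map up to a tropical scalar `c`. -/
theorem stmt_9 {G X : Type*} [Group G] [MulAction G X] [FaithfulSMul G X]
    (n : ℕ) (f : Fin (n + 1) → X → ℝ) (hf : Function.Injective f)
    (hinv : ∀ σ : G, ∃ τ : Equiv.Perm (Fin (n + 1)),
      ∀ (k : Fin (n + 1)) (x : X), f k (σ • x) = f (τ k) x)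
    (hφ : Function.Injective fun x : X =>
      fun k : Fin n => f (Fin.castSucc k) x - f (Fin.last n) x) :
    ∃ Ψ : G →* Equiv.Perm (Fin (n + 1)), Function.Injective Ψ ∧
      ∀ (σ : G) (x : X), ∃ c : ℝ, ∀ k : Fin (n + 1),
        f (Ψ σ k) (σ • x) = c + f k x := by
  classical
  -- choose the permutation for each σ
  choose t ht using hinv
  -- uniqueness of the permutation, using injectivity of f
  have uniq : ∀ (σ : G) (τ : Equiv.Perm (Fin (n + 1))),
      (∀ (k : Fin (n + 1)) (x : X), f k (σ • x) = f (τ k) x) → τ = t σ := by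
    intro σ τ hτ
    ext k
    have : f (τ k) = f (t σ k) := by
      funext x
      rw [← hτ k x, ht σ k x]
    exact congrArg _ (hf this)
  have hmul : ∀ σ ρ : G, t (σ * ρ) = t ρ * t σ := by
    intro σ ρ
    refine (uniq (σ * ρ) (t ρ * t σ) ?_).symm
    intro k x
    rw [mul_smul, ht σ k (ρ • x), ht ρ (t σ k) x]
    rfl
  refine ⟨MonoidHom.mk' (fun σ => (t σ)⁻¹) (by
    intro σ ρ
    show (t (σ * ρ))⁻¹ = (t σ)⁻¹ * (t ρ)⁻¹
    rw [hmul σ ρ, mul_inv_rev]), ?_, ?_⟩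
  · -- injectivity
    intro σ ρ h
    simp only [MonoidHom.mk'_apply, inv_inj] at h
    -- show σ = ρ via faithfulness
    apply FaithfulSMul.eq_of_smul_eq_smul (α := X)
    intro x
    apply hφ
    funext k
    simp only
    have h1 := ht σ (Fin.castSucc k) x
    have h2 := ht ρ (Fin.castSucc k) x
    have h3 := ht σ (Fin.last n) x
    have h4 := ht ρ (Fin.last n) x
    rw [h1, h3, h2, h4, h]
  · intro σ x
    refine ⟨0, fun k => ?_⟩
    simp only [MonoidHom.mk'_apply]
    rw [ht σ ((t σ)⁻¹ k) x]
    simp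
end

section
/- Let G be a group acting faithfully on a set X, n ≥ 0, and f₀,…,f_n : X → ℝ pairwise distinct functions forming a G-invariant family. Assume the map φ : X → ℝⁿ defined by φ(x) = (f_k(x) − f_n(x))_{k=0,…,n−1} is injective. Then there exists an injective group homomorphism Ψ from G to the symmetric group on {0,…,n} such that f_{Ψ(σ)(k)}(σ·x) = f_k(x) for every σ ∈ G, every x ∈ X, and every k ∈ {0,…,n}; equivalently, for each σ the permutation matrix of Ψ(σ) over the max-plus tropical semiring T sends the vector (trop(f₀(σ·x)),…,trop(f_n(σ·x))) exactly to (trop(f₀(x)),…,trop(f_n(x))). -/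
/-- Theorem 9 of the paper: a group acting faithfully with a G-invariant
family of pairwise distinct functions inducing an injective map `φ : X → ℝⁿ` embeds into
the symmetric group on `{0,…,n}` (i.e. into `GL_trop(n+1, T)` by permutation matrices),
compatibly with the induced map, exactly (with no tropical scalar). -/
theorem stmt_10 {G X : Type*} [Group G] [MulAction G X] [FaithfulSMul G X]
    (n : ℕ) (f : Fin (n + 1) → X → ℝ) (hf : Function.Injective f)
    (hinv : ∀ σ : G, ∃ τ : Equiv.Perm (Fin (n + 1)),
      ∀ (k : Fin (n + 1)) (x : X), f k (σ • x) = f (τ k) x)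
    (hφ : Function.Injective fun x : X =>
      fun k : Fin n => f (Fin.castSucc k) x - f (Fin.last n) x) :
    ∃ Ψ : G →* Equiv.Perm (Fin (n + 1)), Function.Injective Ψ ∧
      ∀ (σ : G) (x : X) (k : Fin (n + 1)), f (Ψ σ k) (σ • x) = f k x := by
  classical
  choose τ hτ using hinv
  -- uniqueness of the permutation attached to σ
  have key : ∀ (σ : G) (e : Equiv.Perm (Fin (n + 1))),
      (∀ (k : Fin (n + 1)) (x : X), f k (σ • x) = f (e k) x) → e = τ σ := by
    intro σ e he
    apply Equiv.ext
    intro k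
    have : f (e k) = f (τ σ k) := by
      funext x
      rw [← he k x, hτ σ k x]
    exact hf this
  have hone : τ (1 : G) = 1 := by
    symm
    apply key
    intro k x
    simp
  have hmul : ∀ σ σ' : G, τ (σ * σ') = τ σ' * τ σ := by
    intro σ σ'
    symm
    apply key
    intro k x
    have : (σ * σ') • x = σ • (σ' • x) := mul_smul σ σ' x
    rw [this, hτ σ k (σ' • x), hτ σ' (τ σ k) x]
    rfl
  refine ⟨{ toFun := fun σ => (τ σ)⁻¹,
            map_one' := by show (τ 1)⁻¹ = 1; rw [hone]; simp,
            map_mul' := by intro σ σ'; show (τ (σ * σ'))⁻¹ = _; rw [hmul]; simp [mul_inv_rev] }, ?_, ?_⟩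
  · rw [injective_iff_map_eq_one]
    intro σ hσ
    have hτσ : τ σ = 1 := by
      have : (τ σ)⁻¹ = 1 := hσ
      simpa using congrArg (·⁻¹) this
    have hfix : ∀ x : X, σ • x = x := by
      intro x
      apply hφ
      funext k
      simp only
      have h1 : f (Fin.castSucc k) (σ • x) = f (Fin.castSucc k) x := by
        rw [hτ σ (Fin.castSucc k) x, hτσ]; rfl
      have h2 : f (Fin.last n) (σ • x) = f (Fin.last n) x := by
        rw [hτ σ (Fin.last n) x, hτσ]; rfl
      rw [h1, h2]
    exact FaithfulSMul.eq_of_smul_eq_smul (fun x : X => by rw [hfix x, one_smul])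
  · intro σ x k
    show f ((τ σ)⁻¹ k) (σ • x) = f k x
    rw [hτ σ ((τ σ)⁻¹ k) x]
    simp
end
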